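/- arXiv:2210.15260 — 2 statements merged into one kernel-verified Lean document; each statement's English description precedes it below -/
import Mathlib

section
/- For every nonnegative integer n, the monic Pastro polynomial P_n satisfies the generalized eigenvalue equation Y P_n = λ_n X P_n with eigenvalue λ_n = -b^{-1} q^n; explicitly, for all real x: (x - a^{-1}q) P_n(qx) + (a^{-1}q - b^{-1}x) P_n(x) = -b^{-1} q^n ( (x - q) P_n(q^{-1}x) + (q - bx) P_n(x) ). -/
/-- The q-Pochhammer symbol `(z;q)_k = ∏_{j=0}^{k-1} (1 - z q^j)`. -/
noncomputable def qPoch (q z : ℝ) (k : ℕ) : ℝ :=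
  ∏ j ∈ Finset.range k, (1 - z * q ^ j)

/-- Coefficient `c_{n,k}` of the monic Pastro polynomial. -/
noncomputable def pastroCoeff (q a b : ℝ) (n k : ℕ) : ℝ :=
  (qPoch q (a⁻¹ * b * q ^ (1 - (n : ℤ))) n * qPoch q q n /
      (qPoch q (q ^ (-(n : ℤ))) n * qPoch q b n)) *
    (qPoch q (q ^ (-(n : ℤ))) k * qPoch q b k /
      (qPoch q (a⁻¹ * b * q ^ (1 - (n : ℤ))) k * qPoch q q k))

/-- The monic Pastro polynomial `P_n(x;a,b;q)`. -/
noncomputable def pastroP (q a b : ℝ) (n : ℕ) (x : ℝ) : ℝ :=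
  ∑ k ∈ Finset.range (n + 1), pastroCoeff q a b n k * x ^ k

lemma qPoch_succ (q z : ℝ) (k : ℕ) :
    qPoch q z (k + 1) = qPoch q z k * (1 - z * q ^ k) :=
  Finset.prod_range_succ _ _

lemma pastro_ratio (q a b : ℝ) (hq : q ≠ 0) (hq1 : ∀ k : ℤ, k ≠ 0 → q ^ k ≠ 1)
    (ha : a ≠ 0) (hb : b ≠ 0) (hbq : ∀ m : ℤ, b * q ^ m ≠ 1)
    (habq : ∀ m : ℤ, a⁻¹ * b * q ^ m ≠ 1) (n k : ℕ) :
    pastroCoeff q a b n (k + 1) * ((a * q ^ n - b * q ^ (k + 1)) * (1 - q ^ (k + 1))) =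
      pastroCoeff q a b n k * (a * (q ^ n - q ^ k) * (1 - b * q ^ k)) := by
  have hqn : (q : ℝ) ^ n ≠ 0 := pow_ne_zero _ hq
  have hfacq : ∀ j : ℕ, (1 : ℝ) - q * q ^ j ≠ 0 := by
    intro j
    have h := hq1 ((j : ℤ) + 1) (by omega)
    rw [show ((j : ℤ) + 1) = ((j + 1 : ℕ) : ℤ) by push_cast; ring, zpow_natCast, pow_succ] at h
    intro hcon
    exact h (by linear_combination -hcon)
  have hfacu : ∀ j : ℕ, (1 : ℝ) - a⁻¹ * b * q ^ (1 - (n : ℤ)) * q ^ j ≠ 0 := by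
    intro j
    have h := habq (1 - (n : ℤ) + j)
    rw [zpow_add₀ hq, zpow_natCast] at h
    intro hcon
    exact h (by linear_combination -hcon)
  have hz1 : (q : ℝ) ^ (-(n : ℤ)) = (q ^ n)⁻¹ := by
    rw [zpow_neg, zpow_natCast]
  have hz2 : (q : ℝ) ^ (1 - (n : ℤ)) = q / q ^ n := by
    rw [zpow_sub₀ hq, zpow_one, zpow_natCast]
  have hP4 : qPoch q q k ≠ 0 :=
    Finset.prod_ne_zero_iff.mpr fun j _ => hfacq j
  have hP3 : qPoch q (a⁻¹ * b * (q / q ^ n)) k ≠ 0 := by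
    rw [← hz2]
    exact Finset.prod_ne_zero_iff.mpr fun j _ => hfacu j
  have h3f : (1 : ℝ) - a⁻¹ * b * (q / q ^ n) * q ^ k ≠ 0 := by
    rw [← hz2]; exact hfacu k
  have h4f : (1 : ℝ) - q * q ^ k ≠ 0 := hfacq k
  rw [pastroCoeff, pastroCoeff]
  simp only [qPoch_succ, hz1, hz2]
  set P1 : ℝ := qPoch q ((q ^ n)⁻¹) k with hP1def
  set P2 : ℝ := qPoch q b k with hP2def
  set P3 : ℝ := qPoch q (a⁻¹ * b * (q / q ^ n)) k with hP3def
  set P4 : ℝ := qPoch q q k with hP4def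
  set F : ℝ := qPoch q (a⁻¹ * b * (q / q ^ n)) n * qPoch q q n /
      (qPoch q ((q ^ n)⁻¹) n * qPoch q b n) with hFdef
  have hDen' : (P3 * (1 - a⁻¹ * b * (q / q ^ n) * q ^ k)) * (P4 * (1 - q * q ^ k)) ≠ 0 :=
    mul_ne_zero (mul_ne_zero hP3 h3f) (mul_ne_zero hP4 h4f)
  have hDen : P3 * P4 ≠ 0 := mul_ne_zero hP3 hP4
  apply mul_right_cancel₀ (mul_ne_zero hDen' hDen)
  have e1 : P1 * (1 - (q ^ n)⁻¹ * q ^ k) * (P2 * (1 - b * q ^ k)) /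
      ((P3 * (1 - a⁻¹ * b * (q / q ^ n) * q ^ k)) * (P4 * (1 - q * q ^ k))) *
      ((P3 * (1 - a⁻¹ * b * (q / q ^ n) * q ^ k)) * (P4 * (1 - q * q ^ k))) =
      P1 * (1 - (q ^ n)⁻¹ * q ^ k) * (P2 * (1 - b * q ^ k)) := div_mul_cancel₀ _ hDen'
  have e2 : P1 * P2 / (P3 * P4) * (P3 * P4) = P1 * P2 := div_mul_cancel₀ _ hDen
  have core : P1 * (1 - (q ^ n)⁻¹ * q ^ k) * (P2 * (1 - b * q ^ k)) *
        ((a * q ^ n - b * q ^ (k + 1)) * (1 - q ^ (k + 1))) * (P3 * P4) =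
      P1 * P2 * (a * (q ^ n - q ^ k) * (1 - b * q ^ k)) *
        ((P3 * (1 - a⁻¹ * b * (q / q ^ n) * q ^ k)) * (P4 * (1 - q * q ^ k))) := by
    field_simp
    ring
  linear_combination (F * ((a * q ^ n - b * q ^ (k + 1)) * (1 - q ^ (k + 1))) * (P3 * P4)) * e1
    - (F * (a * (q ^ n - q ^ k) * (1 - b * q ^ k)) *
        ((P3 * (1 - a⁻¹ * b * (q / q ^ n) * q ^ k)) * (P4 * (1 - q * q ^ k)))) * e2
    + F * core

/-- Telescoping helper for the GEVP identity. -/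
noncomputable def pastroD (q b x : ℝ) (n : ℕ) (c : ℕ → ℝ) : ℕ → ℝ
  | 0 => 0
  | (m + 1) => c m * ((q ^ m - b⁻¹) * (1 - q ^ (n - m))) * x ^ (m + 1)

/-- The Pastro polynomial `P_n` solves the generalized eigenvalue problem
`Y P_n = λ_n X P_n` with `λ_n = -b⁻¹ q^n`. -/
theorem pastro_GEVP (q a b : ℝ) (hq : q ≠ 0) (hq1 : ∀ k : ℤ, k ≠ 0 → q ^ k ≠ 1)
    (ha : a ≠ 0) (hb : b ≠ 0)
    (hbq : ∀ m : ℤ, b * q ^ m ≠ 1) (habq : ∀ m : ℤ, a⁻¹ * b * q ^ m ≠ 1)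
    (n : ℕ) (x : ℝ) :
    (x - a⁻¹ * q) * pastroP q a b n (q * x) + (a⁻¹ * q - b⁻¹ * x) * pastroP q a b n x =
      -b⁻¹ * q ^ n *
        ((x - q) * pastroP q a b n (q⁻¹ * x) + (q - b * x) * pastroP q a b n x) := by
  have hb' : b * b⁻¹ = 1 := mul_inv_cancel₀ hb
  have ha' : a * a⁻¹ = 1 := mul_inv_cancel₀ ha
  set c : ℕ → ℝ := pastroCoeff q a b n with hc
  set D : ℕ → ℝ := pastroD q b x n c with hD
  have key : ∀ k ∈ Finset.range (n + 1),
      (x - a⁻¹ * q) * (c k * (q * x) ^ k)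
        + (a⁻¹ * q - b⁻¹ * x + b⁻¹ * q ^ n * (q - b * x)) * (c k * x ^ k)
        + (b⁻¹ * q ^ n * (x - q)) * (c k * (q⁻¹ * x) ^ k)
        = D (k + 1) - D k := by
    intro k hk
    rw [Finset.mem_range] at hk
    match k with
    | 0 =>
      show _ = pastroD q b x n c 1 - pastroD q b x n c 0
      simp only [pastroD, pow_zero, Nat.sub_zero, mul_one, pow_one, sub_zero]
      linear_combination (-(c 0 * q ^ n * x)) * hb'
    | (m + 1) =>
      have hkn : m + 1 ≤ n := by omega
      have hA : q ^ (n - (m + 1)) * q ^ (m + 1) = q ^ n := by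
        rw [← pow_add]; congr 1; omega
      have hB : q ^ (n - m) * q ^ m = q ^ n := by
        rw [← pow_add]; congr 1; omega
      have hI : q ^ (m + 1) * (q⁻¹ * x) ^ (m + 1) = x ^ (m + 1) := by
        rw [mul_pow, ← mul_assoc, ← mul_pow, mul_inv_cancel₀ hq, one_pow, one_mul]
      have hR := pastro_ratio q a b hq hq1 ha hb hbq habq n m
      rw [← hc] at hR
      have Pstar : c (m + 1) * ((1 - q ^ (m + 1)) * (a⁻¹ * q ^ (m + 1) - b⁻¹ * q ^ n))
          = -(c m * ((q ^ m - b⁻¹) * (q ^ m - q ^ n))) := by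
        linear_combination (-(a⁻¹ * b⁻¹)) * hR
          + (c (m + 1) * (1 - q ^ (m + 1)) * b⁻¹ * q ^ n
              - c m * b⁻¹ * (q ^ n - q ^ m) * (1 - b * q ^ m)) * ha'
          + (c m * (q ^ n - q ^ m) * q ^ m
              - c (m + 1) * (1 - q ^ (m + 1)) * a⁻¹ * q ^ (m + 1)) * hb'
      show _ = pastroD q b x n c (m + 2) - pastroD q b x n c (m + 1)
      simp only [pastroD]
      apply mul_left_cancel₀ (pow_ne_zero (m + 1) hq)
      linear_combination (q * x ^ (m + 1)) * Pstar
        + (b⁻¹ * q ^ n * (x - q) * c (m + 1)) * hI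
        + (c (m + 1) * x * x ^ (m + 1) * (q ^ (m + 1) - b⁻¹)) * hA
        - (q * c m * (q ^ m - b⁻¹) * x ^ (m + 1)) * hB
        - (c (m + 1) * x ^ (m + 1) * q ^ n * q ^ (m + 1) * x) * hb'
  have hsum : ∑ k ∈ Finset.range (n + 1),
      ((x - a⁻¹ * q) * (c k * (q * x) ^ k)
        + (a⁻¹ * q - b⁻¹ * x + b⁻¹ * q ^ n * (q - b * x)) * (c k * x ^ k)
        + (b⁻¹ * q ^ n * (x - q)) * (c k * (q⁻¹ * x) ^ k))
      = ∑ k ∈ Finset.range (n + 1), (D (k + 1) - D k) :=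
    Finset.sum_congr rfl key
  rw [Finset.sum_range_sub D] at hsum
  have hend : D (n + 1) - D 0 = 0 := by
    simp [hD, pastroD, Nat.sub_self]
  rw [hend] at hsum
  simp only [Finset.sum_add_distrib, ← Finset.mul_sum] at hsum
  simp only [pastroP, ← hc]
  linear_combination hsum
end

section
/- The operator X produces a q-shift of the parameter b when acting on the Pastro polynomials: for every nonnegative integer n and all real x, (x - q) P_n(q^{-1}x; a, b; q) + (q - bx) P_n(x; a, b; q) = q^{-n} (1 - b q^n) x P_n(x; a, bq; q). -/
lemma qPoch_shift (q z : ℝ) (k : ℕ) :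
    (1 - z) * qPoch q (z * q) k = qPoch q z k * (1 - z * q ^ k) := by
  induction k with
  | zero => simp [qPoch]
  | succ k ih =>
      rw [qPoch_succ, qPoch_succ]
      have h : z * q * q ^ k = z * q ^ (k + 1) := by ring
      rw [h]
      linear_combination (1 - z * q ^ (k + 1)) * ih

lemma qPoch_ne_zero {q z : ℝ} {k : ℕ} (h : ∀ j, j < k → 1 - z * q ^ j ≠ 0) :
    qPoch q z k ≠ 0 :=
  Finset.prod_ne_zero_iff.mpr fun j hj => h j (Finset.mem_range.mp hj)

section facts
variable (q a b : ℝ) (hq : q ≠ 0) (hq1 : ∀ k : ℤ, k ≠ 0 → q ^ k ≠ 1)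
    (ha : a ≠ 0) (hb : b ≠ 0)
    (hbq : ∀ m : ℤ, b * q ^ m ≠ 1) (habq : ∀ m : ℤ, a⁻¹ * b * q ^ m ≠ 1)
    (n : ℕ)

include hq1 in
lemma fact_q : ∀ j : ℕ, (1:ℝ) - q * q ^ j ≠ 0 := by
  intro j
  have h := hq1 ((j+1 : ℕ) : ℤ) (by exact_mod_cast Nat.succ_ne_zero j)
  rw [zpow_natCast] at h
  rw [sub_ne_zero]
  intro hc
  refine h ?_
  rw [pow_succ]
  linear_combination -hc

include hbq in
lemma fact_b : ∀ j : ℕ, (1:ℝ) - b * q ^ j ≠ 0 := by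
  intro j
  have h := hbq (j : ℤ)
  rw [zpow_natCast] at h
  exact sub_ne_zero.mpr fun hc => h hc.symm

include hq habq in
lemma fact_z2 : ∀ j : ℕ, (1:ℝ) - a⁻¹ * b * q ^ (1 - (n : ℤ)) * q ^ j ≠ 0 := by
  intro j
  have h := habq (1 - (n : ℤ) + j)
  rw [sub_ne_zero]
  intro hc
  apply h
  rw [zpow_add₀ hq, zpow_natCast]
  linear_combination -hc

include hq hq1 in
lemma fact_z1 : ∀ j : ℕ, j < n → (1:ℝ) - q ^ (-(n : ℤ)) * q ^ j ≠ 0 := by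
  intro j hj
  have h := hq1 ((j : ℤ) - n) (by omega)
  rw [sub_ne_zero]
  intro hc
  apply h
  rw [zpow_neg, zpow_natCast] at hc
  rw [zpow_sub₀ hq, zpow_natCast, zpow_natCast]
  field_simp at hc ⊢
  linarith

end facts

lemma pastroCoeff_self (q a b : ℝ) (n : ℕ)
    (h1 : qPoch q (q ^ (-(n : ℤ))) n ≠ 0) (h2 : qPoch q b n ≠ 0)
    (h3 : qPoch q (a⁻¹ * b * q ^ (1 - (n : ℤ))) n ≠ 0) (h4 : qPoch q q n ≠ 0) :
    pastroCoeff q a b n n = 1 := by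
  have key : ∀ A B C D : ℝ, A ≠ 0 → B ≠ 0 → C ≠ 0 → D ≠ 0 →
      C * D / (A * B) * (A * B / (C * D)) = 1 := by
    intros A B C D hA hB hC hD
    field_simp
  exact key _ _ _ _ h1 h2 h3 h4

set_option maxHeartbeats 1000000 in
lemma pastro_contig (q a b : ℝ) (hq : q ≠ 0) (hq1 : ∀ k : ℤ, k ≠ 0 → q ^ k ≠ 1)
    (ha : a ≠ 0) (hb : b ≠ 0)
    (hbq : ∀ m : ℤ, b * q ^ m ≠ 1) (habq : ∀ m : ℤ, a⁻¹ * b * q ^ m ≠ 1)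
    (n k : ℕ) (hk : k < n) :
    pastroCoeff q a b n k * ((q ^ k)⁻¹ - b)
      + q * pastroCoeff q a b n (k + 1) * (1 - (q ^ (k + 1))⁻¹)
      = (q ^ n)⁻¹ * (1 - b * q ^ n) * pastroCoeff q a (b * q) n k := by
  have hfq := fact_q q hq1
  have hfb := fact_b q b hbq
  have hfz2 := fact_z2 q a b hq habq n
  have hfz1 := fact_z1 q hq hq1 n
  have hPq : ∀ m, qPoch q q m ≠ 0 := fun m => qPoch_ne_zero fun j _ => hfq j
  have hPb : ∀ m, qPoch q b m ≠ 0 := fun m => qPoch_ne_zero fun j _ => hfb j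
  have hPz2 : ∀ m, qPoch q (a⁻¹ * b * q ^ (1 - (n : ℤ))) m ≠ 0 :=
    fun m => qPoch_ne_zero fun j _ => hfz2 j
  have hPz1 : qPoch q (q ^ (-(n : ℤ))) n ≠ 0 := qPoch_ne_zero fun j hj => hfz1 j hj
  have h1b : (1:ℝ) - b ≠ 0 := by have := hfb 0; simpa using this
  have h1z2 : (1:ℝ) - a⁻¹ * b * q ^ (1 - (n : ℤ)) ≠ 0 := by have := hfz2 0; simpa using this
  have hshb : ∀ m, qPoch q (b * q) m = qPoch q b m * (1 - b * q ^ m) / (1 - b) :=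
    fun m => (eq_div_iff h1b).mpr (by linear_combination qPoch_shift q b m)
  have hshz : ∀ m, qPoch q (a⁻¹ * b * q ^ (1 - (n : ℤ)) * q) m =
      qPoch q (a⁻¹ * b * q ^ (1 - (n : ℤ))) m *
        (1 - a⁻¹ * b * q ^ (1 - (n : ℤ)) * q ^ m) / (1 - a⁻¹ * b * q ^ (1 - (n : ℤ))) :=
    fun m => (eq_div_iff h1z2).mpr
      (by linear_combination qPoch_shift q (a⁻¹ * b * q ^ (1 - (n : ℤ))) m)
  have hW : q ^ (-(n : ℤ)) = (q ^ n)⁻¹ := by rw [zpow_neg, zpow_natCast]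
  rw [hW] at hPz1
  have hbu := hfb k
  have hbv := hfb n
  have hqu := hfq k
  have hzu := hfz2 k
  have hzv := hfz2 n
  have hA3 := hPz2 k
  have hA4 := hPq k
  have hB2 := hPb n
  have hB3 := hPz2 n
  have hB4 := hPq n
  have hu : q ^ k ≠ 0 := pow_ne_zero k hq
  have hv : q ^ n ≠ 0 := pow_ne_zero n hq
  unfold pastroCoeff
  rw [show a⁻¹ * (b * q) * q ^ (1 - (n : ℤ)) = a⁻¹ * b * q ^ (1 - (n : ℤ)) * q from by ring]
  rw [hshb n, hshb k, hshz n, hshz k, qPoch_succ q (q ^ (-(n : ℤ))) k, qPoch_succ q b k,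
    qPoch_succ q (a⁻¹ * b * q ^ (1 - (n : ℤ))) k, qPoch_succ q q k, hW, pow_succ q k]
  set z := a⁻¹ * b * q ^ (1 - (n : ℤ)) with hzdef
  set u := q ^ k with hudef
  set v := q ^ n with hvdef
  set A1 := qPoch q v⁻¹ k with hA1def
  set A2 := qPoch q b k with hA2def
  set A3 := qPoch q z k with hA3def
  set A4 := qPoch q q k with hA4def
  set B1 := qPoch q v⁻¹ n with hB1def
  set B2 := qPoch q b n with hB2def
  set B3 := qPoch q z n with hB3def
  set B4 := qPoch q q n with hB4def
  clear_value z u v A1 A2 A3 A4 B1 B2 B3 B4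
  have hqu' : 1 - u * q ≠ 0 := by rw [mul_comm]; exact hqu
  have hzu' : 1 - u * z ≠ 0 := by rw [mul_comm]; exact hzu
  field_simp
  ring


set_option maxHeartbeats 1000000 in
/-- The operator `X` produces a q-shift of the parameter `b` on the Pastro
polynomials: `X P_n(x;a,b;q) = q^(-n)(1 - b q^n) x P_n(x;a,bq;q)`. -/
theorem pastro_X_contiguity (q a b : ℝ) (hq : q ≠ 0) (hq1 : ∀ k : ℤ, k ≠ 0 → q ^ k ≠ 1)
    (ha : a ≠ 0) (hb : b ≠ 0)
    (hbq : ∀ m : ℤ, b * q ^ m ≠ 1) (habq : ∀ m : ℤ, a⁻¹ * b * q ^ m ≠ 1)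
    (n : ℕ) (x : ℝ) :
    (x - q) * pastroP q a b n (q⁻¹ * x) + (q - b * x) * pastroP q a b n x =
      q ^ (-(n : ℤ)) * (1 - b * q ^ n) * x * pastroP q a (b * q) n x := by
  have hfq := fact_q q hq1
  have hfb := fact_b q b hbq
  have hfz2 := fact_z2 q a b hq habq n
  have hfz1 := fact_z1 q hq hq1 n
  have hPq : ∀ m, qPoch q q m ≠ 0 := fun m => qPoch_ne_zero fun j _ => hfq j
  have hPb : ∀ m, qPoch q b m ≠ 0 := fun m => qPoch_ne_zero fun j _ => hfb j
  have hPz2 : ∀ m, qPoch q (a⁻¹ * b * q ^ (1 - (n : ℤ))) m ≠ 0 :=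
    fun m => qPoch_ne_zero fun j _ => hfz2 j
  have hPz1 : qPoch q (q ^ (-(n : ℤ))) n ≠ 0 := qPoch_ne_zero fun j hj => hfz1 j hj
  have hbq' : ∀ m : ℤ, b * q * q ^ m ≠ 1 := fun m => by
    have h := hbq (m + 1)
    intro hc
    apply h
    rw [zpow_add₀ hq, zpow_one]
    linear_combination hc
  have habq' : ∀ m : ℤ, a⁻¹ * (b * q) * q ^ m ≠ 1 := fun m => by
    have h := habq (m + 1)
    intro hc
    apply h
    rw [zpow_add₀ hq, zpow_one]
    linear_combination hc
  have hfb' := fact_b q (b * q) hbq'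
  have hfz2' := fact_z2 q a (b * q) hq habq' n
  have hPb' : ∀ m, qPoch q (b * q) m ≠ 0 := fun m => qPoch_ne_zero fun j _ => hfb' j
  have hPz2' : ∀ m, qPoch q (a⁻¹ * (b * q) * q ^ (1 - (n : ℤ))) m ≠ 0 :=
    fun m => qPoch_ne_zero fun j _ => hfz2' j
  have hcn : pastroCoeff q a b n n = 1 :=
    pastroCoeff_self q a b n hPz1 (hPb n) (hPz2 n) (hPq n)
  have hcn' : pastroCoeff q a (b * q) n n = 1 :=
    pastroCoeff_self q a (b * q) n hPz1 (hPb' n) (hPz2' n) (hPq n)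
  have hW : q ^ (-(n : ℤ)) = (q ^ n)⁻¹ := by rw [zpow_neg, zpow_natCast]
  rw [hW]
  have hv : q ^ n ≠ 0 := pow_ne_zero n hq
  have e1 : (x - q) * pastroP q a b n (q⁻¹ * x) + (q - b * x) * pastroP q a b n x
      = (∑ k ∈ Finset.range (n + 1),
            pastroCoeff q a b n k * ((q ^ k)⁻¹ - b) * x ^ (k + 1))
        + ∑ k ∈ Finset.range (n + 1),
            q * pastroCoeff q a b n k * (1 - (q ^ k)⁻¹) * x ^ k := by
    unfold pastroP
    rw [Finset.mul_sum, Finset.mul_sum, ← Finset.sum_add_distrib, ← Finset.sum_add_distrib]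
    refine Finset.sum_congr rfl fun k _ => ?_
    rw [mul_pow, inv_pow]
    ring
  have e2 : (q ^ n)⁻¹ * (1 - b * q ^ n) * x * pastroP q a (b * q) n x
      = ∑ k ∈ Finset.range (n + 1),
          (q ^ n)⁻¹ * (1 - b * q ^ n) * pastroCoeff q a (b * q) n k * x ^ (k + 1) := by
    unfold pastroP
    rw [Finset.mul_sum]
    refine Finset.sum_congr rfl fun k _ => ?_
    ring
  rw [e1, e2, Finset.sum_range_succ, Finset.sum_range_succ', Finset.sum_range_succ]
  have h0 : q * pastroCoeff q a b n 0 * (1 - (q ^ 0)⁻¹) * x ^ 0 = 0 := by norm_num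
  have hlast : pastroCoeff q a b n n * ((q ^ n)⁻¹ - b) * x ^ (n + 1)
      = (q ^ n)⁻¹ * (1 - b * q ^ n) * pastroCoeff q a (b * q) n n * x ^ (n + 1) := by
    rw [hcn, hcn']
    field_simp
  have hmid : (∑ k ∈ Finset.range n,
        pastroCoeff q a b n k * ((q ^ k)⁻¹ - b) * x ^ (k + 1))
      + ∑ k ∈ Finset.range n,
          q * pastroCoeff q a b n (k + 1) * (1 - (q ^ (k + 1))⁻¹) * x ^ (k + 1)
      = ∑ k ∈ Finset.range n,
          (q ^ n)⁻¹ * (1 - b * q ^ n) * pastroCoeff q a (b * q) n k * x ^ (k + 1) := by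
    rw [← Finset.sum_add_distrib]
    refine Finset.sum_congr rfl fun k hk => ?_
    have h := pastro_contig q a b hq hq1 ha hb hbq habq n k (Finset.mem_range.mp hk)
    linear_combination x ^ (k + 1) * h
  linear_combination hmid + hlast + h0
end
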